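/- The function V(x, θ) = (K τ₁ / 2)(x − ω/K)² + ∫₀^θ v_e(s) ds is nonnegative and its derivative along trajectories of the active-PI PLL system ẋ = v_e(θ)/τ₁, θ̇ = ω − K(x + (τ₂/τ₁) v_e(θ)) equals −K (τ₂/τ₁) v_e(θ)², hence is nonpositive, where v_e(θ) = (1/2) sin θ. -/

import Mathlib

lemma integral_half_sin (b : ℝ) : (∫ s in (0:ℝ)..b, (1/2) * Real.sin s) = (1 - Real.cos b) / 2 := by
  rw [intervalIntegral.integral_const_mul, integral_sin, Real.cos_zero]
  ring

/-- The Lyapunov function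
`V(x,θ) = (Kτ₁/2)(x − ω/K)² + ∫₀^θ (1/2) sin s ds` is nonnegative and its
derivative along trajectories of the active-PI PLL equals
`−K(τ₂/τ₁)((1/2) sin θ)² ≤ 0`. -/
theorem activePI_lyapunov_derivative
    (K τ₁ τ₂ ω : ℝ) (hK : 0 < K) (hτ₁ : 0 < τ₁) (hτ₂ : 0 < τ₂)
    (x θ : ℝ → ℝ)
    (hx : ∀ t, HasDerivAt x (Real.sin (θ t) / (2 * τ₁)) t)
    (hθ : ∀ t, HasDerivAt θ
      (ω - K * (x t + τ₂ / (2 * τ₁) * Real.sin (θ t))) t) :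
    (∀ a b : ℝ, 0 ≤ K * τ₁ / 2 * (a - ω / K) ^ 2 + ∫ s in (0:ℝ)..b, (1/2) * Real.sin s) ∧
    (∀ t, HasDerivAt
      (fun s => K * τ₁ / 2 * (x s - ω / K) ^ 2 + ∫ u in (0:ℝ)..(θ s), (1/2) * Real.sin u)
      (-(K * (τ₂ / τ₁) * ((1/2) * Real.sin (θ t)) ^ 2)) t) ∧
    (∀ t, -(K * (τ₂ / τ₁) * ((1/2) * Real.sin (θ t)) ^ 2) ≤ 0) := by
  refine ⟨?_, ?_, ?_⟩
  · intro a b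
    rw [integral_half_sin]
    have h1 : 0 ≤ K * τ₁ / 2 * (a - ω / K) ^ 2 := by positivity
    have h2 : Real.cos b ≤ 1 := Real.cos_le_one b
    nlinarith
  · intro t
    have hfun : (fun s => K * τ₁ / 2 * (x s - ω / K) ^ 2 + ∫ u in (0:ℝ)..(θ s), (1/2) * Real.sin u)
        = fun s => K * τ₁ / 2 * (x s - ω / K) ^ 2 + (1 - Real.cos (θ s)) / 2 := by
      funext s; rw [integral_half_sin]
    rw [hfun]
    have h1 : HasDerivAt (fun s => K * τ₁ / 2 * (x s - ω / K) ^ 2)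
        (K * τ₁ / 2 * (2 * (x t - ω / K) * (Real.sin (θ t) / (2 * τ₁)))) t := by
      have := (((hx t).sub_const (ω / K)).pow 2).const_mul (K * τ₁ / 2)
      refine this.congr_deriv ?_
      push_cast
      ring
    have h2 : HasDerivAt (fun s => (1 - Real.cos (θ s)) / 2)
        ((Real.sin (θ t) * (ω - K * (x t + τ₂ / (2 * τ₁) * Real.sin (θ t)))) / 2) t := by
      have := ((hθ t).cos).const_sub 1
      refine (this.div_const 2).congr_deriv ?_
      ring
    have h := h1.add h2
    refine h.congr_deriv ?_
    have hK' : K ≠ 0 := ne_of_gt hK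
    have hτ₁' : τ₁ ≠ 0 := ne_of_gt hτ₁
    field_simp
    ring
  · intro t
    have : 0 ≤ K * (τ₂ / τ₁) * ((1/2) * Real.sin (θ t)) ^ 2 := by positivity
    linarith
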